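/- Let X be a finite set with |X| divisible by 3 and S a collection of 3-element subsets of X. Build the bipartite Min-q-Multiset Multicover instance (for any fixed q ≥ 3) with locations I = S, regions J = X, edges {S, x} for x ∈ S, demands d(x) = 1 for all x, and budget B = |X|/3. Then this instance has a feasible solution x : I → ℤ≥0 with Σ_S x(S) ≤ B if and only if S contains an exact cover of X (a subcollection of pairwise disjoint sets whose union is X). -/
import Mathlib


open Finset

theorem stmt_19 {X : Type*} [Fintype X] [DecidableEq X]
    (𝒮 : Finset (Finset X)) (h3 : ∀ A ∈ 𝒮, A.card = 3)
    (hdvd : 3 ∣ Fintype.card X)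
    (q : ℕ) (hq : 3 ≤ q) :
    (∃ x : Finset X → ℕ, ∃ y : Finset X → X → ℕ,
        (∀ A : Finset X, ∀ j : X, y A j ≠ 0 → A ∈ 𝒮 ∧ j ∈ A) ∧
        (∀ j : X, 1 ≤ ∑ A ∈ 𝒮.filter (fun A => j ∈ A), y A j) ∧
        (∀ A ∈ 𝒮, (∑ j ∈ A, y A j) ≤ q * x A) ∧
        (∑ A ∈ 𝒮, x A) ≤ Fintype.card X / 3)
      ↔
    (∃ 𝒯 ⊆ 𝒮, (∀ A ∈ 𝒯, ∀ B ∈ 𝒯, A ≠ B → Disjoint A B) ∧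
        𝒯.biUnion id = Finset.univ) := by
  constructor
  · rintro ⟨x, y, hy0, hcov, hcap, hbud⟩
    set 𝒯 := 𝒮.filter (fun A => 1 ≤ x A) with h𝒯
    have hsub : 𝒯 ⊆ 𝒮 := filter_subset _ _
    -- every point is covered by some set of 𝒯
    have hcover : ∀ j : X, ∃ A ∈ 𝒯, j ∈ A := by
      intro j
      have h1 := hcov j
      have : ∃ A ∈ 𝒮.filter (fun A => j ∈ A), y A j ≠ 0 := by
        by_contra hc
        push_neg at hc
        have : ∑ A ∈ 𝒮.filter (fun A => j ∈ A), y A j = 0 :=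
          Finset.sum_eq_zero hc
        omega
      obtain ⟨A, hA, hyA⟩ := this
      rw [mem_filter] at hA
      refine ⟨A, ?_, hA.2⟩
      rw [h𝒯, mem_filter]
      refine ⟨hA.1, ?_⟩
      have hsum : (1:ℕ) ≤ ∑ j' ∈ A, y A j' := by
        calc (1:ℕ) ≤ y A j := Nat.one_le_iff_ne_zero.mpr hyA
          _ ≤ ∑ j' ∈ A, y A j' :=
            Finset.single_le_sum (fun _ _ => Nat.zero_le _) hA.2
      have hc := hcap A hA.1
      by_contra hx
      push_neg at hx
      have hx0 : x A = 0 := by omega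
      rw [hx0, mul_zero] at hc
      omega
    have hunion : 𝒯.biUnion id = Finset.univ := by
      apply eq_univ_of_forall
      intro j
      obtain ⟨A, hA, hjA⟩ := hcover j
      exact mem_biUnion.mpr ⟨A, hA, hjA⟩
    -- cardinality counting
    have hcardle : Fintype.card X ≤ 3 * 𝒯.card := by
      calc Fintype.card X = (𝒯.biUnion id).card := by rw [hunion, card_univ]
        _ ≤ ∑ A ∈ 𝒯, (id A).card := card_biUnion_le
        _ = ∑ A ∈ 𝒯, 3 := Finset.sum_congr rfl (fun A hA => h3 A (hsub hA))
        _ = 3 * 𝒯.card := by rw [Finset.sum_const, smul_eq_mul, mul_comm]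
    have hcardge : 𝒯.card ≤ Fintype.card X / 3 := by
      calc 𝒯.card = ∑ A ∈ 𝒯, 1 := by rw [Finset.sum_const, smul_eq_mul, mul_one]
        _ ≤ ∑ A ∈ 𝒯, x A := Finset.sum_le_sum (fun A hA => (mem_filter.mp hA).2)
        _ ≤ ∑ A ∈ 𝒮, x A := Finset.sum_le_sum_of_subset hsub
        _ ≤ Fintype.card X / 3 := hbud
    obtain ⟨k, hk⟩ := hdvd
    have hkeq : Fintype.card X / 3 = k := by omega
    have hcardeq : 3 * 𝒯.card = Fintype.card X := by omega
    refine ⟨𝒯, hsub, ?_, hunion⟩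
    -- disjointness
    intro A hA B hB hAB
    rw [Finset.disjoint_left]
    intro z hzA hzB
    have hApos : 1 ≤ 𝒯.card := Finset.card_pos.mpr ⟨A, hA⟩
    have hsumerase : ∑ C ∈ 𝒯.erase A, (id C).card = 3 * (𝒯.card - 1) := by
      calc ∑ C ∈ 𝒯.erase A, (id C).card = ∑ C ∈ 𝒯.erase A, 3 :=
            Finset.sum_congr rfl (fun C hC => h3 C (hsub (Finset.mem_of_mem_erase hC)))
        _ = 3 * (𝒯.erase A).card := by rw [Finset.sum_const, smul_eq_mul, mul_comm]
        _ = 3 * (𝒯.card - 1) := by rw [Finset.card_erase_of_mem hA]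
    have hcA : A.card = 3 := h3 A (hsub hA)
    have hsub2 : Finset.univ ⊆ (𝒯.erase A).biUnion id ∪ A.erase z := by
      intro w _
      have hw : w ∈ 𝒯.biUnion id := by rw [hunion]; exact mem_univ w
      obtain ⟨C, hC, hwC⟩ := mem_biUnion.mp hw
      by_cases hCA : C = A
      · subst hCA
        by_cases hwz : w = z
        · subst hwz
          exact mem_union_left _ (mem_biUnion.mpr ⟨B, Finset.mem_erase.mpr ⟨Ne.symm hAB, hB⟩, hzB⟩)
        · exact mem_union_right _ (Finset.mem_erase.mpr ⟨hwz, hwC⟩)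
      · exact mem_union_left _ (mem_biUnion.mpr ⟨C, Finset.mem_erase.mpr ⟨hCA, hC⟩, hwC⟩)
    have hle : Fintype.card X ≤ ((𝒯.erase A).biUnion id).card + (A.erase z).card := by
      calc Fintype.card X = (Finset.univ : Finset X).card := (card_univ).symm
        _ ≤ ((𝒯.erase A).biUnion id ∪ A.erase z).card := Finset.card_le_card hsub2
        _ ≤ _ := Finset.card_union_le _ _
    have h1 : ((𝒯.erase A).biUnion id).card ≤ ∑ C ∈ 𝒯.erase A, (id C).card :=
      card_biUnion_le
    have h2 : (A.erase z).card = 2 := by rw [Finset.card_erase_of_mem hzA, hcA]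
    omega
  · rintro ⟨𝒯, hsub, hdisj, hunion⟩
    refine ⟨fun A => if A ∈ 𝒯 then 1 else 0,
      fun A j => if A ∈ 𝒯 ∧ j ∈ A then 1 else 0, ?_, ?_, ?_, ?_⟩
    · intro A j h
      by_cases hc : A ∈ 𝒯 ∧ j ∈ A
      · exact ⟨hsub hc.1, hc.2⟩
      · simp [hc] at h
    · intro j
      have hj : j ∈ 𝒯.biUnion id := by rw [hunion]; exact mem_univ j
      obtain ⟨A, hA, hjA⟩ := mem_biUnion.mp hj
      have hmem : A ∈ 𝒮.filter (fun A => j ∈ A) := mem_filter.mpr ⟨hsub hA, hjA⟩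
      have hjA' : j ∈ A := hjA
      have h1 : (1:ℕ) ≤ (if A ∈ 𝒯 ∧ j ∈ A then 1 else 0) := by simp [hA, hjA']
      exact le_trans h1
        (Finset.single_le_sum (f := fun A => if A ∈ 𝒯 ∧ j ∈ A then 1 else 0)
          (fun _ _ => Nat.zero_le _) hmem)
    · intro A hA
      show (∑ j ∈ A, if A ∈ 𝒯 ∧ j ∈ A then 1 else 0) ≤ q * (if A ∈ 𝒯 then 1 else 0)
      by_cases hc : A ∈ 𝒯
      · have : ∑ j ∈ A, (if A ∈ 𝒯 ∧ j ∈ A then 1 else 0)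
            = ∑ j ∈ A, 1 := by
          apply Finset.sum_congr rfl
          intro j hj; simp [hc, hj]
        rw [this, Finset.sum_const, smul_eq_mul, mul_one, h3 A hA, if_pos hc, mul_one]
        exact hq
      · simp [hc]
    · have hfil : 𝒮.filter (fun A => A ∈ 𝒯) = 𝒯 := by
        ext A
        simp only [mem_filter]
        exact ⟨fun h => h.2, fun h => ⟨hsub h, h⟩⟩
      have hsum : (∑ A ∈ 𝒮, if A ∈ 𝒯 then 1 else 0) = 𝒯.card := by
        rw [← Finset.sum_filter, hfil, Finset.sum_const, smul_eq_mul, mul_one]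
      show (∑ A ∈ 𝒮, if A ∈ 𝒯 then 1 else 0) ≤ Fintype.card X / 3
      rw [hsum]
      have hcard : ∑ A ∈ 𝒯, (id A).card = (𝒯.biUnion id).card :=
        (Finset.card_biUnion (fun A hA B hB hAB => hdisj A hA B hB hAB)).symm
      have : ∑ A ∈ 𝒯, (id A).card = 3 * 𝒯.card := by
        calc ∑ A ∈ 𝒯, (id A).card = ∑ A ∈ 𝒯, 3 :=
              Finset.sum_congr rfl (fun A hA => h3 A (hsub hA))
          _ = 3 * 𝒯.card := by rw [Finset.sum_const, smul_eq_mul, mul_comm]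
      rw [hunion, card_univ] at hcard
      omega
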